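/- arXiv:2604.01426 — 2 statements merged into one kernel-verified Lean document; each statement's English description precedes it below -/
import Mathlib

section
/- Let L̄ = L ⊗ I_d where L is the Laplacian of a connected graph on m vertices. For fixed Ā_i = diag(A_{i1},…,A_{im}) (block diagonal with d×d blocks), b̄_i the stacked vector of b_{ij} ∈ ℝ^d, A_i = [A_{i1} ⋯ A_{im}], and b_i = Σ_j b_{ij}, one has min over z_i ∈ ℝ^{md} of ‖Ā_i x − b̄_i − L̄ z_i‖² = (1/m)‖A_i x − b_i‖² for every x ∈ ℝ^{md}. -/
open Finset Matrix

-- column sums of the Laplacian are zero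
lemma lap_col_sum {m : ℕ} (G : SimpleGraph (Fin m)) [DecidableRel G.Adj] (k : Fin m) :
    ∑ j, G.lapMatrix ℝ j k = 0 := by
  have hs := G.isSymm_lapMatrix (R := ℝ)
  have h0 := congrFun (G.lapMatrix_mulVec_const_eq_zero (R := ℝ)) k
  simp only [Matrix.mulVec, dotProduct, mul_one, Pi.zero_apply] at h0
  calc ∑ j, G.lapMatrix ℝ j k = ∑ j, G.lapMatrix ℝ k j := by
        refine Finset.sum_congr rfl fun j _ => ?_
        conv_lhs => rw [← hs]
        rfl
    _ = 0 := h0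

-- surjectivity onto sum-zero vectors for connected graphs
lemma lap_surj_onto_sum_zero {m : ℕ} (hm : 0 < m) (G : SimpleGraph (Fin m))
    [DecidableRel G.Adj] (hconn : G.Connected) (u : Fin m → ℝ) (hu : ∑ j, u j = 0) :
    ∃ z : Fin m → ℝ, (G.lapMatrix ℝ).mulVec z = u := by
  classical
  set Lm : (Fin m → ℝ) →ₗ[ℝ] (Fin m → ℝ) := Matrix.mulVecLin (G.lapMatrix ℝ) with hLm
  have hker : LinearMap.ker Lm = Submodule.span ℝ {fun _ => (1:ℝ)} := by
    ext y
    constructor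
    · intro hy
      have hy' : Matrix.toLin' (G.lapMatrix ℝ) y = 0 := by
        rw [Matrix.toLin'_apply]
        exact hy
      rw [Matrix.toLin'_apply, SimpleGraph.lapMatrix_mulVec_eq_zero_iff_forall_reachable] at hy'
      have i0 : Fin m := ⟨0, hm⟩
      rw [Submodule.mem_span_singleton]
      refine ⟨y i0, funext fun i => ?_⟩
      simp [hy' i i0 (hconn i i0)]
    · intro hy
      rw [Submodule.mem_span_singleton] at hy
      obtain ⟨a, rfl⟩ := hy
      have : Lm (a • fun _ => (1:ℝ)) = a • Lm (fun _ => (1:ℝ)) := map_smul _ _ _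
      rw [LinearMap.mem_ker, this, hLm]
      simp [Matrix.mulVecLin_apply, G.lapMatrix_mulVec_const_eq_zero]
  have hone : (fun _ => (1:ℝ)) ≠ (0 : Fin m → ℝ) := by
    intro h
    have := congrFun h ⟨0, hm⟩
    simp at this
  have hker1 : Module.finrank ℝ (LinearMap.ker Lm) = 1 := by
    rw [hker]
    exact finrank_span_singleton hone
  set f : (Fin m → ℝ) →ₗ[ℝ] ℝ := ∑ j, LinearMap.proj j with hf
  have hfapp : ∀ y : Fin m → ℝ, f y = ∑ j, y j := by
    intro y; simp [hf]
  have hfsurj : Function.Surjective f := by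
    intro c
    refine ⟨fun _ => c / m, ?_⟩
    rw [hfapp]
    simp only [Finset.sum_const, Finset.card_univ, Fintype.card_fin, nsmul_eq_mul]
    field_simp
  have htot : Module.finrank ℝ (Fin m → ℝ) = m := by simp
  have hrange : Module.finrank ℝ (LinearMap.range Lm) = m - 1 := by
    have := LinearMap.finrank_range_add_finrank_ker Lm
    rw [htot, hker1] at this
    omega
  have hkerf : Module.finrank ℝ (LinearMap.ker f) = m - 1 := by
    have := LinearMap.finrank_range_add_finrank_ker f
    rw [htot, LinearMap.range_eq_top.mpr hfsurj] at this
    simp at this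
    omega
  have hle : LinearMap.range Lm ≤ LinearMap.ker f := by
    rintro _ ⟨v, rfl⟩
    rw [LinearMap.mem_ker, hfapp]
    have : ∀ j, Lm v j = ∑ k, G.lapMatrix ℝ j k * v k := by
      intro j; simp [hLm, Matrix.mulVecLin_apply, Matrix.mulVec, dotProduct]
    simp_rw [this]
    rw [Finset.sum_comm]
    simp_rw [← Finset.sum_mul]
    simp [lap_col_sum G]
  have heq : LinearMap.range Lm = LinearMap.ker f :=
    Submodule.eq_of_le_of_finrank_le hle (by rw [hrange, hkerf])
  have hu' : u ∈ LinearMap.range Lm := by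
    rw [heq, LinearMap.mem_ker, hfapp]; exact hu
  obtain ⟨z, hz⟩ := hu'
  exact ⟨z, hz⟩

open Kronecker

/-- Let `L̄ = L ⊗ I_d` where `L` is the Laplacian of a connected graph on `m` vertices.
For `Ā = diag(A_1,…,A_m)` block diagonal with `d×d` blocks `A j`, `b̄` the stacked
vector of the `b j ∈ ℝ^d`, row block `[A_1 ⋯ A_m]` and `bᵢ = Σ_j b j`, we have
`min_{z} ‖Ā x − b̄ − L̄ z‖² = (1/m) ‖[A_1 ⋯ A_m] x − Σ_j b j‖²` for every `x`
(squared Euclidean norms written as sums of squares). -/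
theorem min_over_z_eq_inv_m_residual (m d : ℕ) (hm : 0 < m) (hd : 0 < d)
    (G : SimpleGraph (Fin m)) [DecidableRel G.Adj] (hconn : G.Connected)
    (Lbar : Matrix (Fin m × Fin d) (Fin m × Fin d) ℝ)
    (hLbar : Lbar = (G.lapMatrix ℝ) ⊗ₖ (1 : Matrix (Fin d) (Fin d) ℝ))
    (A : Fin m → Matrix (Fin d) (Fin d) ℝ) (b : Fin m → Fin d → ℝ)
    (Abar : Matrix (Fin m × Fin d) (Fin m × Fin d) ℝ)
    (hAbar : ∀ p q, Abar p q = if p.1 = q.1 then A p.1 p.2 q.2 else 0)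
    (bbar : Fin m × Fin d → ℝ) (hbbar : ∀ p, bbar p = b p.1 p.2)
    (x : Fin m × Fin d → ℝ) :
    IsLeast {c : ℝ | ∃ z : Fin m × Fin d → ℝ,
        c = ∑ p, (Abar.mulVec x p - bbar p - Lbar.mulVec z p) ^ 2}
      ((1 / (m : ℝ)) *
        ∑ r : Fin d,
          ((∑ j : Fin m, (A j).mulVec (fun c => x (j, c)) r) - ∑ j : Fin m, b j r) ^ 2) := by
  classical
  have hm' : (m : ℝ) ≠ 0 := Nat.cast_ne_zero.mpr hm.ne'
  set v : Fin m × Fin d → ℝ := fun p => Abar.mulVec x p - bbar p with hv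
  set s : Fin d → ℝ := fun r => ∑ j, v (j, r) with hsdef
  -- computation of Abar.mulVec
  have hvA : ∀ j r, Abar.mulVec x (j, r) = (A j).mulVec (fun c => x (j, c)) r := by
    intro j r
    simp only [Matrix.mulVec, dotProduct, Fintype.sum_prod_type]
    rw [Finset.sum_eq_single j]
    · simp [hAbar]
    · intro k _ hk
      simp [hAbar, (Ne.symm hk)]
    · simp
  -- s equals the residual of the concatenated system
  have hs : ∀ r, s r = (∑ j : Fin m, (A j).mulVec (fun c => x (j, c)) r)
      - ∑ j : Fin m, b j r := by
    intro r
    simp only [hsdef, hv, hbbar]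
    rw [Finset.sum_sub_distrib]
    simp [hvA]
  -- computation of Lbar.mulVec
  have hLrow : ∀ (z : Fin m × Fin d → ℝ) (j : Fin m) (r : Fin d),
      Lbar.mulVec z (j, r) = ∑ k, G.lapMatrix ℝ j k * z (k, r) := by
    intro z j r
    simp only [hLbar, Matrix.mulVec, dotProduct, Fintype.sum_prod_type,
      Matrix.kroneckerMap_apply, Matrix.one_apply, mul_ite, mul_one, mul_zero, ite_mul, zero_mul]
    refine Finset.sum_congr rfl fun k _ => ?_
    simp
  have hLcolsum : ∀ (z : Fin m × Fin d → ℝ) (r : Fin d),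
      ∑ j, Lbar.mulVec z (j, r) = 0 := by
    intro z r
    simp_rw [hLrow]
    rw [Finset.sum_comm]
    simp_rw [← Finset.sum_mul]
    simp [lap_col_sum G]
  constructor
  · -- membership : exhibit a minimizer
    have hex : ∀ r : Fin d, ∃ zr : Fin m → ℝ,
        (G.lapMatrix ℝ).mulVec zr = fun j => v (j, r) - s r / m := by
      intro r
      apply lap_surj_onto_sum_zero hm G hconn
      rw [Finset.sum_sub_distrib]
      simp only [Finset.sum_const, Finset.card_univ, Fintype.card_fin, nsmul_eq_mul]
      show s r - (m : ℝ) * (s r / m) = 0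
      field_simp
      ring
    choose zr hzr using hex
    refine ⟨fun p => zr p.2 p.1, ?_⟩
    have hres : ∀ p : Fin m × Fin d,
        Abar.mulVec x p - bbar p - Lbar.mulVec (fun q => zr q.2 q.1) p = s p.2 / m := by
      rintro ⟨j, r⟩
      have h1 : Lbar.mulVec (fun q => zr q.2 q.1) (j, r)
          = (G.lapMatrix ℝ).mulVec (zr r) j := by
        rw [hLrow]
        simp [Matrix.mulVec, dotProduct]
      rw [h1, hzr]
      show v (j, r) - (v (j, r) - s r / m) = s r / m
      ring
    calc (1 / (m : ℝ)) * ∑ r : Fin d,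
          ((∑ j : Fin m, (A j).mulVec (fun c => x (j, c)) r) - ∑ j : Fin m, b j r) ^ 2
        = ∑ p : Fin m × Fin d, (s p.2 / m) ^ 2 := by
          rw [Fintype.sum_prod_type]
          dsimp only
          rw [Finset.sum_const, Finset.card_univ, Fintype.card_fin,
            Finset.mul_sum, nsmul_eq_mul, Finset.mul_sum]
          refine Finset.sum_congr rfl fun r _ => ?_
          rw [← hs r]
          field_simp
      _ = _ := by
          refine Finset.sum_congr rfl fun p _ => ?_
          rw [hres p]
  · -- lower bound
    rintro c ⟨z, rfl⟩
    set w := Lbar.mulVec z with hw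
    have hsum : ∀ r : Fin d, ∑ j, (v (j, r) - w (j, r)) = s r := by
      intro r
      rw [Finset.sum_sub_distrib, hLcolsum z r, sub_zero]
    have hrearr : ∑ p : Fin m × Fin d, (Abar.mulVec x p - bbar p - w p) ^ 2
        = ∑ r : Fin d, ∑ j : Fin m, (v (j, r) - w (j, r)) ^ 2 := by
      rw [Fintype.sum_prod_type, Finset.sum_comm]
    rw [hrearr, Finset.mul_sum]
    refine Finset.sum_le_sum fun r _ => ?_
    have hC := sq_sum_le_card_mul_sum_sq (s := (Finset.univ : Finset (Fin m)))
      (f := fun j => v (j, r) - w (j, r))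
    rw [hsum r, Finset.card_univ, Fintype.card_fin] at hC
    have hs' : ((∑ j : Fin m, (A j).mulVec (fun c => x (j, c)) r) - ∑ j : Fin m, b j r)
        = s r := (hs r).symm
    rw [hs']
    rw [div_mul_eq_mul_div, div_le_iff₀ (by positivity), one_mul]
    calc s r ^ 2 ≤ m * ∑ j, (v (j, r) - w (j, r)) ^ 2 := hC
      _ = (∑ j, (v (j, r) - w (j, r)) ^ 2) * m := by ring
end

section
/- Let f(θ) = ⟨0| U(θ)† M U(θ) |0⟩ where U(θ) = B e^{-iθG/2} C for fixed unitaries B, C, a Hermitian operator M, and a Hermitian involution G (G² = I). Then ∂f/∂θ = (1/2)[f(θ + π/2) − f(θ − π/2)] (the parameter shift rule). -/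
open scoped ComplexInnerProductSpace

/-- Parameter shift rule: for `f(θ) = ⟨0| U(θ)† M U(θ) |0⟩` with
`U(θ) = B e^{-iθG/2} C = B (cos(θ/2) I − i sin(θ/2) G) C`, where `B, C` are unitary,
`M` is Hermitian, and `G` is a Hermitian involution, one has
`∂f/∂θ = (1/2)[f(θ + π/2) − f(θ − π/2)]`. -/
theorem parameter_shift_rule {E : Type*} [NormedAddCommGroup E]
    [InnerProductSpace ℂ E] [FiniteDimensional ℂ E]
    (ψ : E) (hψ : ‖ψ‖ = 1)
    (B C M G : E →ₗ[ℂ] E)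
    (hB : LinearMap.adjoint B ∘ₗ B = LinearMap.id ∧ B ∘ₗ LinearMap.adjoint B = LinearMap.id)
    (hC : LinearMap.adjoint C ∘ₗ C = LinearMap.id ∧ C ∘ₗ LinearMap.adjoint C = LinearMap.id)
    (hM : LinearMap.adjoint M = M)
    (hG : LinearMap.adjoint G = G) (hG2 : G ∘ₗ G = LinearMap.id)
    (U : ℝ → (E →ₗ[ℂ] E))
    (hU : ∀ θ : ℝ, U θ =
      B ∘ₗ (Complex.cos ((θ : ℂ) / 2) • LinearMap.id
        - (Complex.sin ((θ : ℂ) / 2) * Complex.I) • G) ∘ₗ C)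
    (f : ℝ → ℝ) (hf : ∀ θ, f θ = (⟪U θ ψ, M (U θ ψ)⟫).re) :
    ∀ θ : ℝ, HasDerivAt f ((1 / 2) * (f (θ + Real.pi / 2) - f (θ - Real.pi / 2))) θ := by
  set φ := C ψ with hφ
  set A := (LinearMap.adjoint B) ∘ₗ M ∘ₗ B with hA
  set p : ℝ := (⟪φ, A φ⟫).re with hp
  set q : ℝ := (⟪G φ, A (G φ)⟫).re with hq
  set r : ℝ := (Complex.I * (⟪G φ, A φ⟫ - ⟪φ, A (G φ)⟫)).re with hr
  have hBA : ∀ x y : E, ⟪B x, M (B y)⟫ = ⟪x, A y⟫ := by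
    intro x y
    rw [hA]
    simp only [LinearMap.comp_apply, LinearMap.adjoint_inner_right]
  have hkey : ∀ t : ℝ, f t
      = (p + q) / 2 + (p - q) / 2 * Real.cos t + r / 2 * Real.sin t := by
    intro t
    have hc : Complex.cos ((t : ℂ) / 2) = ((Real.cos (t / 2) : ℝ) : ℂ) := by
      rw [show ((t : ℂ) / 2) = (((t / 2 : ℝ) : ℝ) : ℂ) by push_cast; ring,
        Complex.ofReal_cos]
    have hs : Complex.sin ((t : ℂ) / 2) = ((Real.sin (t / 2) : ℝ) : ℂ) := by
      rw [show ((t : ℂ) / 2) = (((t / 2 : ℝ) : ℝ) : ℂ) by push_cast; ring,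
        Complex.ofReal_sin]
    have hexp : (⟪U t ψ, M (U t ψ)⟫)
        = ((Real.cos (t / 2) : ℂ))^2 * ⟪φ, A φ⟫
          + ((Real.sin (t / 2) : ℂ))^2 * ⟪G φ, A (G φ)⟫
          + ((Real.sin (t / 2) * Real.cos (t / 2) : ℝ) : ℂ)
            * (Complex.I * (⟪G φ, A φ⟫ - ⟪φ, A (G φ)⟫)) := by
      rw [hU, hc, hs]
      simp only [LinearMap.comp_apply, LinearMap.sub_apply, LinearMap.smul_apply,
        LinearMap.id_apply, map_sub, map_smul, ← hφ]
      rw [inner_sub_left, inner_sub_right, inner_sub_right]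
      simp only [inner_smul_left, inner_smul_right, smul_smul, map_mul,
        Complex.conj_ofReal, Complex.conj_I, hBA]
      push_cast
      ring_nf
      rw [Complex.I_sq]
      ring
    rw [hf, hexp]
    have h1 : Real.cos t = 2 * Real.cos (t / 2) ^ 2 - 1 := by
      have := Real.cos_two_mul (t / 2); rwa [show 2 * (t / 2) = t by ring] at this
    have h2 : Real.sin t = 2 * Real.sin (t / 2) * Real.cos (t / 2) := by
      have := Real.sin_two_mul (t / 2); rwa [show 2 * (t / 2) = t by ring] at this
    have h3 : Real.sin (t / 2) ^ 2 + Real.cos (t / 2) ^ 2 = 1 :=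
      Real.sin_sq_add_cos_sq _
    rw [← Complex.ofReal_pow, ← Complex.ofReal_pow, Complex.add_re, Complex.add_re,
      Complex.re_ofReal_mul, Complex.re_ofReal_mul, Complex.re_ofReal_mul,
      ← hp, ← hq, ← hr]
    rw [h1, h2]; linear_combination q * h3
  intro θ
  have hd : HasDerivAt f (-(Real.sin θ) * ((p - q) / 2) + Real.cos θ * (r / 2)) θ := by
    have hfun : f = fun t => (p + q) / 2 + (p - q) / 2 * Real.cos t + r / 2 * Real.sin t :=
      funext hkey
    rw [hfun]
    have hcos := (Real.hasDerivAt_cos θ).const_mul ((p - q) / 2)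
    have hsin := (Real.hasDerivAt_sin θ).const_mul (r / 2)
    have := (hcos.const_add ((p + q) / 2)).add hsin
    exact this.congr_deriv (by ring)
  have heq : (1 / 2) * (f (θ + Real.pi / 2) - f (θ - Real.pi / 2))
      = -(Real.sin θ) * ((p - q) / 2) + Real.cos θ * (r / 2) := by
    rw [hkey, hkey]
    rw [Real.cos_add, Real.sin_add, Real.cos_sub, Real.sin_sub,
      Real.cos_pi_div_two, Real.sin_pi_div_two]
    ring
  rw [heq]
  exact hd
end
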